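/- Let the general recurrent-IFS interpolation setup hold and assume the matchable conditions. Then there exists a unique continuous function f : I×J → ℝ such that f(x_i,y_j)=z_{ij} for all 0≤i≤N, 0≤j≤M, and f(u_i(x),v_j(y)) = F_{ij}(x,y,f(x,y)) for all (x,y)∈D'_{ij} and all 1≤i≤N, 1≤j≤M (equivalently, the graph pieces (Γf|_{D_{ij}}) form the invariant set of the recurrent IFS with maps W_{ij}(x,y,z)=(u_i(x),v_j(y),F_{ij}(x,y,z))). -/

import Mathlib

noncomputable section
open Set

structure Axis where
  N : ℕ
  x : ℕ → ℝ
  px : ℕ → ℕ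
  u : ℕ → ℝ → ℝ

namespace Axis

variable (a : Axis)

def x' (i : ℕ) : ℝ := a.x (a.px i)
def I : Set ℝ := Icc (a.x 0) (a.x a.N)
def Ii (i : ℕ) : Set ℝ := Icc (a.x (i - 1)) (a.x i)
def Ii' (i : ℕ) : Set ℝ := uIcc (a.x' (i - 1)) (a.x' i)
def uinv (i : ℕ) : ℝ → ℝ := Function.invFunOn (a.u i) (a.Ii' i)

structure Hyp (a : Axis) : Prop where
  hN : 2 ≤ a.N
  hx : ∀ i < a.N, a.x i < a.x (i + 1)
  hpx : ∀ i ≤ a.N, a.px i ≤ a.N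
  hu : ∀ i, 1 ≤ i → i ≤ a.N →
    (∃ c, 0 ≤ c ∧ c < 1 ∧ ∀ s ∈ a.Ii' i, ∀ t ∈ a.Ii' i, |a.u i s - a.u i t| ≤ c * |s - t|) ∧
    Set.BijOn (a.u i) (a.Ii' i) (a.Ii i) ∧
    a.u i (a.x' (i - 1)) = a.x (i - 1) ∧ a.u i (a.x' i) = a.x i

variable {a} (h : Hyp a)
include h

lemma mono : ∀ {k l : ℕ}, k ≤ l → l ≤ a.N → a.x k ≤ a.x l := by
  intro k l hkl hlN
  induction l with
  | zero => simp [Nat.le_zero.mp hkl]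
  | succ n ih =>
    rcases Nat.lt_or_ge k (n+1) with hk | hk
    · exact le_trans (ih (Nat.lt_succ_iff.mp hk) (le_trans (Nat.le_succ n) hlN))
        (le_of_lt (h.hx n (Nat.lt_of_succ_le hlN)))
    · have : k = n + 1 := le_antisymm hkl hk
      simp [this]

lemma strict : ∀ {k l : ℕ}, k < l → l ≤ a.N → a.x k < a.x l := by
  intro k l hkl hlN
  have h1 : a.x k ≤ a.x (l - 1) := mono h (Nat.le_sub_one_of_lt hkl) (le_trans (Nat.sub_le _ _) hlN)
  have h2 : a.x (l - 1) < a.x l := by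
    have hl : 1 ≤ l := Nat.one_le_of_lt hkl
    have : l - 1 < a.N := lt_of_lt_of_le (Nat.sub_lt hl one_pos) hlN
    have := h.hx (l - 1) this
    rwa [Nat.sub_add_cancel hl] at this
  linarith

lemma Ii_subset {i : ℕ} (hi1 : 1 ≤ i) (hiN : i ≤ a.N) : a.Ii i ⊆ a.I :=
  Icc_subset_Icc (mono h (Nat.zero_le _) (le_trans (Nat.sub_le _ _) hiN)) (mono h hiN le_rfl)

lemma x'_mem {k : ℕ} (hk : k ≤ a.N) : a.x' k ∈ a.I :=
  ⟨mono h (Nat.zero_le _) (h.hpx k hk), mono h (h.hpx k hk) le_rfl⟩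

lemma Ii'_subset {i : ℕ} (hi1 : 1 ≤ i) (hiN : i ≤ a.N) : a.Ii' i ⊆ a.I := by
  have h1 := x'_mem h (le_trans (Nat.sub_le i 1) hiN)
  have h2 := x'_mem h hiN
  exact uIcc_subset_Icc h1 h2

omit h in
lemma x'_mem_Ii' (i : ℕ) : a.x' i ∈ a.Ii' i := right_mem_uIcc

omit h in
lemma x'_pred_mem_Ii' (i : ℕ) : a.x' (i - 1) ∈ a.Ii' i := left_mem_uIcc

lemma uinv_mapsTo {i : ℕ} (hi1 : 1 ≤ i) (hiN : i ≤ a.N) :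
    MapsTo (a.uinv i) (a.Ii i) (a.Ii' i) :=
  ((h.hu i hi1 hiN).2.1.surjOn).mapsTo_invFunOn

lemma u_uinv {i : ℕ} (hi1 : 1 ≤ i) (hiN : i ≤ a.N) {x : ℝ} (hx : x ∈ a.Ii i) :
    a.u i (a.uinv i x) = x :=
  ((h.hu i hi1 hiN).2.1.surjOn).rightInvOn_invFunOn hx

lemma uinv_u {i : ℕ} (hi1 : 1 ≤ i) (hiN : i ≤ a.N) {s : ℝ} (hs : s ∈ a.Ii' i) :
    a.uinv i (a.u i s) = s :=
  ((h.hu i hi1 hiN).2.1.injOn).leftInvOn_invFunOn hs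

lemma uinv_right {i : ℕ} (hi1 : 1 ≤ i) (hiN : i ≤ a.N) : a.uinv i (a.x i) = a.x' i := by
  have := uinv_u h hi1 hiN (x'_mem_Ii' i)
  rwa [(h.hu i hi1 hiN).2.2.2] at this

lemma uinv_left {i : ℕ} (hi1 : 1 ≤ i) (hiN : i ≤ a.N) :
    a.uinv i (a.x (i - 1)) = a.x' (i - 1) := by
  have := uinv_u h hi1 hiN (x'_pred_mem_Ii' i)
  rwa [(h.hu i hi1 hiN).2.2.1] at this

lemma u_contOn {i : ℕ} (hi1 : 1 ≤ i) (hiN : i ≤ a.N) : ContinuousOn (a.u i) (a.Ii' i) := by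
  obtain ⟨c, hc0, _, hc⟩ := (h.hu i hi1 hiN).1
  refine LipschitzOnWith.continuousOn (K := ⟨c, hc0⟩) ?_
  refine LipschitzOnWith.of_dist_le_mul fun s hs t ht => ?_
  rw [Real.dist_eq, Real.dist_eq]
  exact hc s hs t ht

lemma uinv_contOn {i : ℕ} (hi1 : 1 ≤ i) (hiN : i ≤ a.N) :
    ContinuousOn (a.uinv i) (a.Ii i) := by
  have hbij := (h.hu i hi1 hiN).2.1
  have hcomp : IsCompact (a.Ii' i) := isCompact_uIcc
  haveI : CompactSpace (a.Ii' i) := isCompact_iff_compactSpace.mp hcomp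
  set e : a.Ii' i ≃ a.Ii i := Set.BijOn.equiv (a.u i) hbij with he
  have hecont : Continuous e := by
    have := (u_contOn h hi1 hiN).mapsToRestrict hbij.mapsTo
    exact this
  set homeo : a.Ii' i ≃ₜ a.Ii i := Continuous.homeoOfEquivCompactToT2 (f := e) hecont with hh
  have hkey : (a.Ii i).restrict (a.uinv i) = fun y => ((homeo.symm y : a.Ii' i) : ℝ) := by
    funext y
    have h1 : a.uinv i (y : ℝ) ∈ a.Ii' i := uinv_mapsTo h hi1 hiN y.2
    have h2 : ((homeo.symm y : a.Ii' i) : ℝ) ∈ a.Ii' i := (homeo.symm y).2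
    refine hbij.injOn h1 h2 ?_
    have hu1 : a.u i (a.uinv i (y : ℝ)) = (y : ℝ) := u_uinv h hi1 hiN y.2
    have hu2 : a.u i ((homeo.symm y : a.Ii' i) : ℝ) = (y : ℝ) := by
      have h3 : e (homeo.symm y) = y := homeo.apply_symm_apply y
      exact congrArg Subtype.val h3
    rw [hu1, hu2]
  rw [continuousOn_iff_continuous_restrict, show (a.Ii i).domRestrict (a.uinv i) = _ from hkey]
  exact continuous_subtype_val.comp (homeo.symm.continuous)

omit h in
open Classical in
def ix (x : ℝ) : ℕ :=
  if hx : ∃ n, x ≤ a.x n ∧ n ≤ a.N then max 1 (Nat.find hx) else 1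

lemma ix_spec {x : ℝ} (hxI : x ∈ a.I) :
    1 ≤ a.ix x ∧ a.ix x ≤ a.N ∧ x ∈ a.Ii (a.ix x) := by
  classical
  have hN := h.hN
  have hex : ∃ n, x ≤ a.x n ∧ n ≤ a.N := ⟨a.N, hxI.2, le_rfl⟩
  have hix : a.ix x = max 1 (Nat.find hex) := by
    unfold ix
    rw [dif_pos hex]
  set n := Nat.find hex with hn
  have hspec := Nat.find_spec hex
  rw [← hn] at hspec
  have hnN : n ≤ a.N := hspec.2
  rcases Nat.eq_zero_or_pos n with h0 | hpos
  · have hx0 : x ≤ a.x 0 := by rw [h0] at hspec; exact hspec.1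
    have hxeq : x = a.x 0 := le_antisymm hx0 hxI.1
    have : a.ix x = 1 := by simp [hix, h0]
    rw [this]
    refine ⟨le_rfl, Nat.one_le_iff_ne_zero.mpr (by omega), ?_⟩
    constructor
    · simp [hxeq]
    · rw [hxeq]; exact mono h (Nat.zero_le 1) (by omega)
  · have : a.ix x = n := by simp [hix]; omega
    rw [this]
    refine ⟨hpos, hnN, ?_, hspec.1⟩
    have hlt : ¬ (x ≤ a.x (n - 1) ∧ n - 1 ≤ a.N) := by
      rw [hn]; exact Nat.find_min hex (by omega)
    push_neg at hlt
    by_contra hc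
    push_neg at hc
    have := hlt (le_of_lt hc)
    omega

lemma x_mem_Ii {i : ℕ} (hiN : i ≤ a.N) : a.x i ∈ a.Ii i :=
  ⟨mono h (Nat.sub_le i 1) hiN, le_rfl⟩

lemma x_pred_mem_Ii {i : ℕ} (hiN : i ≤ a.N) : a.x (i - 1) ∈ a.Ii i :=
  ⟨le_rfl, mono h (Nat.sub_le i 1) hiN⟩

/-- overlap lemma -/
lemma overlap {i i2 : ℕ} (hi1 : 1 ≤ i) (hiN : i ≤ a.N) (h21 : 1 ≤ i2) (h2N : i2 ≤ a.N)
    (hlt : i < i2) {x : ℝ} (hx : x ∈ a.Ii i) (hx2 : x ∈ a.Ii i2) :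
    i2 = i + 1 ∧ x = a.x i := by
  have h1 : x ≤ a.x i := hx.2
  have h2 : a.x (i2 - 1) ≤ x := hx2.1
  have hii : i ≤ i2 - 1 := by omega
  rcases Nat.eq_or_lt_of_le hii with heq | hlt2
  · have : a.x (i2 - 1) = a.x i := by rw [heq]
    refine ⟨by omega, le_antisymm h1 (by rw [← this]; exact h2)⟩
  · exfalso
    have := strict h hlt2 (by omega)
    linarith

/-- `uinv` agrees at the shared point `x i` for adjacent pieces. -/
lemma uinv_shared {i : ℕ} (hi1 : 1 ≤ i) (hiN : i + 1 ≤ a.N) :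
    a.uinv i (a.x i) = a.x' i ∧ a.uinv (i+1) (a.x i) = a.x' i := by
  refine ⟨uinv_right h hi1 (by omega), ?_⟩
  have := uinv_left h (i := i + 1) (by omega) hiN
  simpa using this

lemma endsel {i : ℕ} (hiN : i ≤ a.N) :
    a.x i ∈ a.Ii (max 1 i) ∧ a.uinv (max 1 i) (a.x i) = a.x' i ∧ a.x' i ∈ a.Ii' (max 1 i) := by
  rcases Nat.eq_zero_or_pos i with h0 | hp
  · subst h0
    have hm : max 1 0 = 1 := by omega
    rw [hm]
    refine ⟨⟨le_rfl, mono h (by omega) (by have := h.hN; omega)⟩, ?_, ?_⟩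
    · have := uinv_left h (i := 1) le_rfl (by have := h.hN; omega)
      simpa using this
    · have := x'_pred_mem_Ii' (a := a) 1
      simpa using this
  · have hm : max 1 i = i := by omega
    rw [hm]
    exact ⟨x_mem_Ii h hiN, uinv_right h hp hiN, x'_mem_Ii' i⟩

lemma uinv_agree {i i2 : ℕ} (hi1 : 1 ≤ i) (hiN : i ≤ a.N) (h21 : 1 ≤ i2) (h2N : i2 ≤ a.N)
    {x : ℝ} (hx : x ∈ a.Ii i) (hx2 : x ∈ a.Ii i2) : a.uinv i x = a.uinv i2 x := by
  rcases lt_trichotomy i i2 with hlt | heq | hgt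
  · obtain ⟨he, hxe⟩ := overlap h hi1 hiN h21 h2N hlt hx hx2
    subst he; subst hxe
    rw [(uinv_shared h hi1 h2N).1, (uinv_shared h hi1 h2N).2]
  · subst heq; rfl
  · obtain ⟨he, hxe⟩ := overlap h h21 h2N hi1 hiN hgt hx2 hx
    subst he; subst hxe
    rw [(uinv_shared h h21 hiN).1, (uinv_shared h h21 hiN).2]

end Axis


/- General recurrent-IFS interpolation setup (Liang–Ruan,
   "Construction and box dimension of recurrent fractal interpolation surfaces"). -/

noncomputable section
open Set

/-- Data of the general recurrent-IFS interpolation setup: grid points `x i`, `y j`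
(for `i ≤ N`, `j ≤ M`), interpolation values `z i j`, index maps `px`, `py` selecting
the points `x' i = x (px i)`, `y' j = y (py j)`, the horizontal contractions `u i`, `v j`,
the maps `F i j`, and the contraction ratios `alpha i j`. -/
structure GenData where
  N : ℕ
  M : ℕ
  x : ℕ → ℝ
  y : ℕ → ℝ
  z : ℕ → ℕ → ℝ
  px : ℕ → ℕ
  py : ℕ → ℕ
  u : ℕ → ℝ → ℝ
  v : ℕ → ℝ → ℝ
  F : ℕ → ℕ → ℝ → ℝ → ℝ → ℝ
  alpha : ℕ → ℕ → ℝ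

namespace GenData

def x' (D : GenData) (i : ℕ) : ℝ := D.x (D.px i)
def y' (D : GenData) (j : ℕ) : ℝ := D.y (D.py j)
def I (D : GenData) : Set ℝ := Icc (D.x 0) (D.x D.N)
def J (D : GenData) : Set ℝ := Icc (D.y 0) (D.y D.M)
def Ii (D : GenData) (i : ℕ) : Set ℝ := Icc (D.x (i - 1)) (D.x i)
def Jj (D : GenData) (j : ℕ) : Set ℝ := Icc (D.y (j - 1)) (D.y j)
def Dij (D : GenData) (i j : ℕ) : Set (ℝ × ℝ) := D.Ii i ×ˢ D.Jj j
def Ii' (D : GenData) (i : ℕ) : Set ℝ := uIcc (D.x' (i - 1)) (D.x' i)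
def Jj' (D : GenData) (j : ℕ) : Set ℝ := uIcc (D.y' (j - 1)) (D.y' j)
def Dij' (D : GenData) (i j : ℕ) : Set (ℝ × ℝ) := D.Ii' i ×ˢ D.Jj' j
def z' (D : GenData) (i j : ℕ) : ℝ := D.z (D.px i) (D.py j)

/-- Hypotheses on the grid data: `N, M ≥ 2`, increasing grids, `x' i` chosen from the grid
with `|x'_i - x'_{i-1}| > x_i - x_{i-1}`, and each `u i` (resp. `v j`) a contractive
homeomorphism from `I'_i` onto `I_i` (resp. `J'_j` onto `J_j`) with the endpoint conditions. -/
structure GridHyp (D : GenData) : Prop where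
  hN : 2 ≤ D.N
  hM : 2 ≤ D.M
  hx : ∀ i < D.N, D.x i < D.x (i + 1)
  hy : ∀ j < D.M, D.y j < D.y (j + 1)
  hpx : ∀ i ≤ D.N, D.px i ≤ D.N
  hpy : ∀ j ≤ D.M, D.py j ≤ D.M
  hgapx : ∀ i, 1 ≤ i → i ≤ D.N → D.x i - D.x (i - 1) < |D.x' i - D.x' (i - 1)|
  hgapy : ∀ j, 1 ≤ j → j ≤ D.M → D.y j - D.y (j - 1) < |D.y' j - D.y' (j - 1)|
  hu : ∀ i, 1 ≤ i → i ≤ D.N →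
    (∃ c, 0 ≤ c ∧ c < 1 ∧ ∀ s ∈ D.Ii' i, ∀ t ∈ D.Ii' i, |D.u i s - D.u i t| ≤ c * |s - t|) ∧
    Set.BijOn (D.u i) (D.Ii' i) (D.Ii i) ∧
    D.u i (D.x' (i - 1)) = D.x (i - 1) ∧ D.u i (D.x' i) = D.x i
  hv : ∀ j, 1 ≤ j → j ≤ D.M →
    (∃ c, 0 ≤ c ∧ c < 1 ∧ ∀ s ∈ D.Jj' j, ∀ t ∈ D.Jj' j, |D.v j s - D.v j t| ≤ c * |s - t|) ∧
    Set.BijOn (D.v j) (D.Jj' j) (D.Jj j) ∧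
    D.v j (D.y' (j - 1)) = D.y (j - 1) ∧ D.v j (D.y' j) = D.y j

/-- Hypotheses on the maps `F i j`: continuity on `D'_{ij} × ℝ`, the interpolation
(corner) conditions, and the uniform contraction in the third variable. -/
structure FHyp (D : GenData) : Prop where
  hFcont : ∀ i j, 1 ≤ i → i ≤ D.N → 1 ≤ j → j ≤ D.M →
    ContinuousOn (fun p : (ℝ × ℝ) × ℝ => D.F i j p.1.1 p.1.2 p.2) (D.Dij' i j ×ˢ (univ : Set ℝ))
  hFval : ∀ i j, 1 ≤ i → i ≤ D.N → 1 ≤ j → j ≤ D.M →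
    ∀ k ∈ ({i - 1, i} : Set ℕ), ∀ l ∈ ({j - 1, j} : Set ℕ),
      D.F i j (D.x' k) (D.y' l) (D.z' k l) = D.z k l
  halpha : ∀ i j, 1 ≤ i → i ≤ D.N → 1 ≤ j → j ≤ D.M → 0 < D.alpha i j ∧ D.alpha i j < 1
  hFlip : ∀ i j, 1 ≤ i → i ≤ D.N → 1 ≤ j → j ≤ D.M →
    ∀ p ∈ D.Dij' i j, ∀ z1 z2 : ℝ,
      |D.F i j p.1 p.2 z1 - D.F i j p.1 p.2 z2| ≤ D.alpha i j * |z1 - z2|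

/-- The matchable conditions.  Here `x* = u_i⁻¹(x_i) = u_{i+1}⁻¹(x_i) = x'_i` and
`y* = v_j⁻¹(y_j) = v_{j+1}⁻¹(y_j) = y'_j` (since `u i (x' i) = u (i+1) (x' i) = x i`
and `u i`, `u (i+1)` are injective, and similarly for `v`). -/
def Matchable (D : GenData) : Prop :=
  (∀ i j, 1 ≤ i → i < D.N → 1 ≤ j → j ≤ D.M →
    ∀ t ∈ D.Jj' j, ∀ w : ℝ, D.F i j (D.x' i) t w = D.F (i + 1) j (D.x' i) t w) ∧
  (∀ i j, 1 ≤ i → i ≤ D.N → 1 ≤ j → j < D.M →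
    ∀ t ∈ D.Ii' i, ∀ w : ℝ, D.F i j t (D.y' j) w = D.F i (j + 1) t (D.y' j) w)

/-- `f` is a recurrent fractal interpolation function for the data: it is continuous on
`I × J`, interpolates the data, and satisfies the self-referential equation
`f (u_i x, v_j y) = F_{ij} (x, y, f (x, y))` on each `D'_{ij}` (equivalently, the pieces
of its graph form the invariant set of the recurrent IFS `{W_{ij}}`). -/
def IsRFIF (D : GenData) (f : ℝ × ℝ → ℝ) : Prop :=
  ContinuousOn f (D.I ×ˢ D.J) ∧
  (∀ i ≤ D.N, ∀ j ≤ D.M, f (D.x i, D.y j) = D.z i j) ∧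
  (∀ i j, 1 ≤ i → i ≤ D.N → 1 ≤ j → j ≤ D.M →
    ∀ p ∈ D.Dij' i j, f (D.u i p.1, D.v j p.2) = D.F i j p.1 p.2 (f p))

end GenData


namespace RFIFAux
open Set GenData

variable (D : GenData)

abbrev AX : Axis := ⟨D.N, D.x, D.px, D.u⟩
abbrev AY : Axis := ⟨D.M, D.y, D.py, D.v⟩

variable {D}

lemma axh (h1 : D.GridHyp) : (AX D).Hyp := ⟨h1.hN, h1.hx, h1.hpx, h1.hu⟩
lemma ayh (h1 : D.GridHyp) : (AY D).Hyp := ⟨h1.hM, h1.hy, h1.hpy, h1.hv⟩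

variable (D)

def K : Set (ℝ × ℝ) := D.I ×ˢ D.J

def T0 (g : ℝ × ℝ → ℝ) (p : ℝ × ℝ) : ℝ :=
  D.F ((AX D).ix p.1) ((AY D).ix p.2)
    ((AX D).uinv ((AX D).ix p.1) p.1) ((AY D).uinv ((AY D).ix p.2) p.2)
    (g (((AX D).uinv ((AX D).ix p.1) p.1), ((AY D).uinv ((AY D).ix p.2) p.2)))

variable {D}

lemma matchX (h1 : D.GridHyp) (hm : D.Matchable) {i i2 j : ℕ}
    (hi1 : 1 ≤ i) (hiN : i ≤ D.N) (h21 : 1 ≤ i2) (h2N : i2 ≤ D.N)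
    (hj1 : 1 ≤ j) (hjM : j ≤ D.M) {x : ℝ} (hx : x ∈ (AX D).Ii i) (hx2 : x ∈ (AX D).Ii i2)
    {t : ℝ} (ht : t ∈ (AY D).Ii' j) (w : ℝ) :
    D.F i j ((AX D).uinv i x) t w = D.F i2 j ((AX D).uinv i2 x) t w := by
  have hax := axh h1
  rcases lt_trichotomy i i2 with hlt | heq | hgt
  · obtain ⟨he, hxe⟩ := Axis.overlap hax hi1 hiN h21 h2N hlt hx hx2
    subst he
    subst hxe
    rw [(Axis.uinv_shared hax hi1 h2N).1, (Axis.uinv_shared hax hi1 h2N).2]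
    exact hm.1 i j hi1 (by omega) hj1 hjM t ht w
  · subst heq; rfl
  · obtain ⟨he, hxe⟩ := Axis.overlap hax h21 h2N hi1 hiN hgt hx2 hx
    subst he
    subst hxe
    rw [(Axis.uinv_shared hax h21 hiN).1, (Axis.uinv_shared hax h21 hiN).2]
    exact (hm.1 i2 j h21 (by omega) hj1 hjM t ht w).symm

lemma matchY (h1 : D.GridHyp) (hm : D.Matchable) {i j j2 : ℕ}
    (hi1 : 1 ≤ i) (hiN : i ≤ D.N) (hj1 : 1 ≤ j) (hjM : j ≤ D.M) (h21 : 1 ≤ j2) (h2M : j2 ≤ D.M)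
    {y : ℝ} (hy : y ∈ (AY D).Ii j) (hy2 : y ∈ (AY D).Ii j2)
    {s : ℝ} (hs : s ∈ (AX D).Ii' i) (w : ℝ) :
    D.F i j s ((AY D).uinv j y) w = D.F i j2 s ((AY D).uinv j2 y) w := by
  have hay := ayh h1
  rcases lt_trichotomy j j2 with hlt | heq | hgt
  · obtain ⟨he, hye⟩ := Axis.overlap hay hj1 hjM h21 h2M hlt hy hy2
    subst he
    subst hye
    rw [(Axis.uinv_shared hay hj1 h2M).1, (Axis.uinv_shared hay hj1 h2M).2]
    exact hm.2 i j hi1 hiN hj1 (by omega) s hs w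
  · subst heq; rfl
  · obtain ⟨he, hye⟩ := Axis.overlap hay h21 h2M hj1 hjM hgt hy2 hy
    subst he
    subst hye
    rw [(Axis.uinv_shared hay h21 hjM).1, (Axis.uinv_shared hay h21 hjM).2]
    exact (hm.2 i j2 hi1 hiN h21 (by omega) s hs w).symm

lemma Tval (h1 : D.GridHyp) (hm : D.Matchable) (g : ℝ × ℝ → ℝ) {i j : ℕ} {x y : ℝ}
    (hi1 : 1 ≤ i) (hiN : i ≤ D.N) (hj1 : 1 ≤ j) (hjM : j ≤ D.M)
    (hx : x ∈ (AX D).Ii i) (hy : y ∈ (AY D).Ii j) :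
    T0 D g (x, y) =
      D.F i j ((AX D).uinv i x) ((AY D).uinv j y)
        (g (((AX D).uinv i x), ((AY D).uinv j y))) := by
  have hax := axh h1
  have hay := ayh h1
  obtain ⟨hi01, hi0N, hxi0⟩ := Axis.ix_spec hax (Axis.Ii_subset hax hi1 hiN hx)
  obtain ⟨hj01, hj0N, hyj0⟩ := Axis.ix_spec hay (Axis.Ii_subset hay hj1 hjM hy)
  set i0 := (AX D).ix x
  set j0 := (AY D).ix y
  have e1 : (AX D).uinv i0 x = (AX D).uinv i x := Axis.uinv_agree hax hi01 hi0N hi1 hiN hxi0 hx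
  have e2 : (AY D).uinv j0 y = (AY D).uinv j y := Axis.uinv_agree hay hj01 hj0N hj1 hjM hyj0 hy
  calc T0 D g (x, y)
      = D.F i0 j0 ((AX D).uinv i0 x) ((AY D).uinv j0 y)
          (g (((AX D).uinv i0 x), ((AY D).uinv j0 y))) := rfl
    _ = D.F i0 j0 ((AX D).uinv i0 x) ((AY D).uinv j0 y)
          (g (((AX D).uinv i x), ((AY D).uinv j y))) := by
        rw [show ((AX D).uinv i0 x, (AY D).uinv j0 y)
            = ((AX D).uinv i x, (AY D).uinv j y) from by rw [e1, e2]]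
    _ = D.F i j0 ((AX D).uinv i x) ((AY D).uinv j0 y)
          (g (((AX D).uinv i x), ((AY D).uinv j y))) :=
        matchX h1 hm hi01 hi0N hi1 hiN hj01 hj0N hxi0 hx
          (Axis.uinv_mapsTo hay hj01 hj0N hyj0) _
    _ = D.F i j ((AX D).uinv i x) ((AY D).uinv j y)
          (g (((AX D).uinv i x), ((AY D).uinv j y))) :=
        matchY h1 hm hi1 hiN hj01 hj0N hj1 hjM hyj0 hy
          (Axis.uinv_mapsTo hax hi1 hiN hx) _

lemma Dij'_subset_K (h1 : D.GridHyp) {i j : ℕ}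
    (hi1 : 1 ≤ i) (hiN : i ≤ D.N) (hj1 : 1 ≤ j) (hjM : j ≤ D.M) :
    D.Dij' i j ⊆ K D :=
  Set.prod_mono (Axis.Ii'_subset (axh h1) hi1 hiN) (Axis.Ii'_subset (ayh h1) hj1 hjM)

lemma Dij_subset_K (h1 : D.GridHyp) {i j : ℕ}
    (hi1 : 1 ≤ i) (hiN : i ≤ D.N) (hj1 : 1 ≤ j) (hjM : j ≤ D.M) :
    D.Dij i j ⊆ K D :=
  Set.prod_mono (Axis.Ii_subset (axh h1) hi1 hiN) (Axis.Ii_subset (ayh h1) hj1 hjM)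

lemma exists_alphaMax (h1 : D.GridHyp) (h2 : D.FHyp) :
    ∃ α : ℝ, 0 ≤ α ∧ α < 1 ∧
      ∀ i j, 1 ≤ i → i ≤ D.N → 1 ≤ j → j ≤ D.M → D.alpha i j ≤ α := by
  have hN := h1.hN
  have hM := h1.hM
  set s := Finset.Icc 1 D.N ×ˢ Finset.Icc 1 D.M with hs
  have h11 : ((1,1) : ℕ × ℕ) ∈ s := by
    simp only [hs, Finset.mem_product, Finset.mem_Icc]
    omega
  have hne : s.Nonempty := ⟨(1,1), h11⟩
  refine ⟨s.sup' hne (fun q => D.alpha q.1 q.2), ?_, ?_, ?_⟩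
  · exact le_trans (h2.halpha 1 1 le_rfl (by omega) le_rfl (by omega)).1.le
      (Finset.le_sup' (f := fun q : ℕ × ℕ => D.alpha q.1 q.2) h11)
  · rw [Finset.sup'_lt_iff]
    intro q hq
    simp only [hs, Finset.mem_product, Finset.mem_Icc] at hq
    exact (h2.halpha q.1 q.2 hq.1.1 hq.1.2 hq.2.1 hq.2.2).2
  · intro i j hi1 hiN hj1 hjM
    have hmem : ((i, j) : ℕ × ℕ) ∈ s := by
      simp only [hs, Finset.mem_product, Finset.mem_Icc]
      exact ⟨⟨hi1, hiN⟩, hj1, hjM⟩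
    exact Finset.le_sup' (f := fun q : ℕ × ℕ => D.alpha q.1 q.2) hmem

lemma T0_bound (h1 : D.GridHyp) (h2 : D.FHyp) {g h : ℝ × ℝ → ℝ} {d : ℝ}
    (hd : ∀ q ∈ K D, |g q - h q| ≤ d) {α : ℝ}
    (hα : ∀ i j, 1 ≤ i → i ≤ D.N → 1 ≤ j → j ≤ D.M → D.alpha i j ≤ α) (hd0 : 0 ≤ d) :
    ∀ p ∈ K D, |T0 D g p - T0 D h p| ≤ α * d := by
  rintro ⟨x, y⟩ hp
  have hax := axh h1
  have hay := ayh h1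
  obtain ⟨hi1, hiN, hxi⟩ := Axis.ix_spec hax hp.1
  obtain ⟨hj1, hjM, hyj⟩ := Axis.ix_spec hay hp.2
  set i := (AX D).ix x
  set j := (AY D).ix y
  set q : ℝ × ℝ := ((AX D).uinv i x, (AY D).uinv j y) with hq
  have hqmem : q ∈ D.Dij' i j :=
    ⟨Axis.uinv_mapsTo hax hi1 hiN hxi, Axis.uinv_mapsTo hay hj1 hjM hyj⟩
  have hstep := h2.hFlip i j hi1 hiN hj1 hjM q hqmem (g q) (h q)
  have hqK : q ∈ K D := Dij'_subset_K h1 hi1 hiN hj1 hjM hqmem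
  have halpha := (h2.halpha i j hi1 hiN hj1 hjM).1
  calc |T0 D g (x, y) - T0 D h (x, y)|
      = |D.F i j q.1 q.2 (g q) - D.F i j q.1 q.2 (h q)| := rfl
    _ ≤ D.alpha i j * |g q - h q| := hstep
    _ ≤ D.alpha i j * d := by
        exact mul_le_mul_of_nonneg_left (hd q hqK) halpha.le
    _ ≤ α * d := mul_le_mul_of_nonneg_right (hα i j hi1 hiN hj1 hjM) hd0

lemma T0_congr (h1 : D.GridHyp) {g h : ℝ × ℝ → ℝ}
    (hgh : ∀ q ∈ K D, g q = h q) : ∀ p ∈ K D, T0 D g p = T0 D h p := by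
  rintro ⟨x, y⟩ hp
  have hax := axh h1
  have hay := ayh h1
  obtain ⟨hi1, hiN, hxi⟩ := Axis.ix_spec hax hp.1
  obtain ⟨hj1, hjM, hyj⟩ := Axis.ix_spec hay hp.2
  set i := (AX D).ix x
  set j := (AY D).ix y
  have hqK : ((AX D).uinv i x, (AY D).uinv j y) ∈ K D :=
    Dij'_subset_K h1 hi1 hiN hj1 hjM
      ⟨Axis.uinv_mapsTo hax hi1 hiN hxi, Axis.uinv_mapsTo hay hj1 hjM hyj⟩
  show D.F i j _ _ (g _) = D.F i j _ _ (h _)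
  rw [hgh _ hqK]

lemma T0_cont (h1 : D.GridHyp) (h2 : D.FHyp) (hm : D.Matchable) {g : ℝ × ℝ → ℝ}
    (hg : ContinuousOn g (K D)) : ContinuousOn (T0 D g) (K D) := by
  have hax := axh h1
  have hay := ayh h1
  have hpiece : ∀ i j, 1 ≤ i → i ≤ D.N → 1 ≤ j → j ≤ D.M →
      ContinuousOn (T0 D g) (D.Dij i j) := by
    intro i j hi1 hiN hj1 hjM
    have hφ : ContinuousOn
        (fun p : ℝ × ℝ => ((AX D).uinv i p.1, (AY D).uinv j p.2)) (D.Dij i j) := by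
      refine ContinuousOn.prodMk ?_ ?_
      · exact (Axis.uinv_contOn hax hi1 hiN).comp continuousOn_fst (fun p hp => hp.1)
      · exact (Axis.uinv_contOn hay hj1 hjM).comp continuousOn_snd (fun p hp => hp.2)
    have hmapφ : Set.MapsTo (fun p : ℝ × ℝ => ((AX D).uinv i p.1, (AY D).uinv j p.2))
        (D.Dij i j) (D.Dij' i j) := fun p hp =>
      ⟨Axis.uinv_mapsTo hax hi1 hiN hp.1, Axis.uinv_mapsTo hay hj1 hjM hp.2⟩
    have hgφ : ContinuousOn
        (fun p : ℝ × ℝ => g ((AX D).uinv i p.1, (AY D).uinv j p.2)) (D.Dij i j) :=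
      hg.comp hφ (fun p hp => Dij'_subset_K h1 hi1 hiN hj1 hjM (hmapφ hp))
    have hFc := h2.hFcont i j hi1 hiN hj1 hjM
    have hcomp : ContinuousOn
        (fun p : ℝ × ℝ => D.F i j ((AX D).uinv i p.1) ((AY D).uinv j p.2)
          (g ((AX D).uinv i p.1, (AY D).uinv j p.2))) (D.Dij i j) := by
      refine hFc.comp (hφ.prodMk hgφ) ?_
      exact fun p hp => ⟨hmapφ hp, Set.mem_univ _⟩
    refine hcomp.congr ?_
    rintro ⟨x, y⟩ hp
    exact Tval h1 hm g hi1 hiN hj1 hjM hp.1 hp.2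
  have hcov : K D ⊆ ⋃ (q : Fin D.N × Fin D.M), D.Dij (q.1.val + 1) (q.2.val + 1) := by
    rintro ⟨x, y⟩ hp
    obtain ⟨hi1, hiN, hxi⟩ := Axis.ix_spec hax (x := x) hp.1
    obtain ⟨hj1, hjM, hyj⟩ := Axis.ix_spec hay (x := y) hp.2
    have hiN' : (AX D).ix x ≤ D.N := hiN
    have hjM' : (AY D).ix y ≤ D.M := hjM
    refine Set.mem_iUnion.mpr ⟨(⟨(AX D).ix x - 1, by omega⟩, ⟨(AY D).ix y - 1, by omega⟩), ?_⟩
    have e1 : (AX D).ix x - 1 + 1 = (AX D).ix x := by omega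
    have e2 : (AY D).ix y - 1 + 1 = (AY D).ix y := by omega
    refine ⟨?_, ?_⟩
    · show x ∈ D.Ii _
      rw [e1]; exact hxi
    · show y ∈ D.Jj _
      rw [e2]; exact hyj
  refine ContinuousOn.mono ?_ hcov
  refine (locallyFinite_of_finite _).continuousOn_iUnion ?_ ?_
  · exact fun q => (isClosed_Icc.prod isClosed_Icc)
  · rintro ⟨qi, qj⟩
    exact hpiece _ _ (Nat.le_add_left 1 _) qi.isLt (Nat.le_add_left 1 _) qj.isLt

lemma grid_values (h1 : D.GridHyp) (h2 : D.FHyp) (hm : D.Matchable) {f : ℝ × ℝ → ℝ}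
    (hfix : ∀ p ∈ K D, T0 D f p = f p) :
    ∀ i ≤ D.N, ∀ j ≤ D.M, f (D.x i, D.y j) = D.z i j := by
  have hax := axh h1
  have hay := ayh h1
  obtain ⟨α, hα0, hα1, hαle⟩ := exists_alphaMax h1 h2
  set S := Finset.range (D.N + 1) ×ˢ Finset.range (D.M + 1) with hS
  have hSne : S.Nonempty := ⟨(0,0), by simp [hS]⟩
  set E := S.sup' hSne (fun q => |f (D.x q.1, D.y q.2) - D.z q.1 q.2|) with hE
  have hmemS : ∀ {i j : ℕ}, i ≤ D.N → j ≤ D.M → (i, j) ∈ S := by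
    intro i j hi hj
    simp only [hS, Finset.mem_product, Finset.mem_range]
    omega
  have key : ∀ i, i ≤ D.N → ∀ j, j ≤ D.M →
      |f (D.x i, D.y j) - D.z i j| ≤ α * E := by
    intro i hiN j hjM
    obtain ⟨hxm, hxu, hx'm⟩ := Axis.endsel hax hiN
    obtain ⟨hym, hyu, hy'm⟩ := Axis.endsel hay hjM
    have hi'1 : 1 ≤ max 1 i := le_max_left _ _
    have hi'N : max 1 i ≤ D.N := by have := h1.hN; omega
    have hj'1 : 1 ≤ max 1 j := le_max_left _ _
    have hj'M : max 1 j ≤ D.M := by have := h1.hM; omega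
    have hpK : (D.x i, D.y j) ∈ K D :=
      ⟨⟨Axis.mono hax (Nat.zero_le i) hiN, Axis.mono hax hiN le_rfl⟩,
       ⟨Axis.mono hay (Nat.zero_le j) hjM, Axis.mono hay hjM le_rfl⟩⟩
    have hfx := hfix _ hpK
    rw [Tval h1 hm f hi'1 hi'N hj'1 hj'M hxm hym, hxu, hyu] at hfx
    have himem : i ∈ ({max 1 i - 1, max 1 i} : Set ℕ) := by
      simp only [Set.mem_insert_iff, Set.mem_singleton_iff]
      omega
    have hjmem : j ∈ ({max 1 j - 1, max 1 j} : Set ℕ) := by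
      simp only [Set.mem_insert_iff, Set.mem_singleton_iff]
      omega
    have hz := h2.hFval (max 1 i) (max 1 j) hi'1 hi'N hj'1 hj'M i himem j hjmem
    have hlip := h2.hFlip (max 1 i) (max 1 j) hi'1 hi'N hj'1 hj'M
      (D.x' i, D.y' j) ⟨hx'm, hy'm⟩ (f (D.x' i, D.y' j)) (D.z' i j)
    have hpx := h1.hpx i hiN
    have hpy := h1.hpy j hjM
    have hfx' : D.F (max 1 i) (max 1 j) (D.x' i) (D.y' j) (f (D.x' i, D.y' j)) =
        f (D.x i, D.y j) := hfx
    calc |f (D.x i, D.y j) - D.z i j|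
        = |D.F (max 1 i) (max 1 j) (D.x' i) (D.y' j) (f (D.x' i, D.y' j)) -
            D.F (max 1 i) (max 1 j) (D.x' i) (D.y' j) (D.z' i j)| := by
          rw [hfx', hz]
      _ ≤ D.alpha (max 1 i) (max 1 j) * |f (D.x' i, D.y' j) - D.z' i j| := hlip
      _ ≤ α * E := by
          refine mul_le_mul (hαle _ _ hi'1 hi'N hj'1 hj'M) ?_ (abs_nonneg _) hα0
          exact Finset.le_sup' (f := fun q => |f (D.x q.1, D.y q.2) - D.z q.1 q.2|)
            (hmemS hpx hpy)
  have hE0 : 0 ≤ E := le_trans (abs_nonneg _)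
    (Finset.le_sup' (f := fun q => |f (D.x q.1, D.y q.2) - D.z q.1 q.2|)
      (hmemS (Nat.zero_le _) (Nat.zero_le _)))
  have hEle : E ≤ α * E := by
    refine Finset.sup'_le _ _ ?_
    rintro ⟨i, j⟩ hq
    simp only [hS, Finset.mem_product, Finset.mem_range] at hq
    exact key i (by omega) j (by omega)
  have hEzero : E = 0 := by nlinarith
  intro i hiN j hjM
  have := key i hiN j hjM
  rw [hEzero, mul_zero] at this
  have := abs_nonpos_iff.mp this
  linarith [sub_eq_zero.mp this]

end RFIFAux
open GenData in
/-- **Theorem 2.1.** Under the general recurrent-IFS interpolation setup with the matchable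
conditions, there is a unique continuous function `f` on `I × J` interpolating the data
such that `f (u_i x, v_j y) = F_{ij}(x, y, f(x,y))` on each `D'_{ij}`; i.e. the graph
pieces `(Γ f|_{D_{ij}})` form the invariant set of the recurrent IFS. -/
theorem exists_unique_RFIF (D : GenData) (h1 : D.GridHyp) (h2 : D.FHyp) (hm : D.Matchable) :
    ∃ f : ℝ × ℝ → ℝ, D.IsRFIF f ∧
      ∀ g : ℝ × ℝ → ℝ, D.IsRFIF g → Set.EqOn g f (D.I ×ˢ D.J) := by
  classical
  have hax := RFIFAux.axh h1
  have hay := RFIFAux.ayh h1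
  have hKcomp : IsCompact (RFIFAux.K D) := isCompact_Icc.prod isCompact_Icc
  haveI : CompactSpace (RFIFAux.K D) := isCompact_iff_compactSpace.mp hKcomp
  have hKne0 : ((D.x 0, D.y 0) : ℝ × ℝ) ∈ RFIFAux.K D :=
    ⟨⟨le_rfl, Axis.mono hax (Nat.zero_le _) le_rfl⟩,
     ⟨le_rfl, Axis.mono hay (Nat.zero_le _) le_rfl⟩⟩
  haveI : Nonempty (RFIFAux.K D) := ⟨⟨_, hKne0⟩⟩
  obtain ⟨α, hα0, hα1, hαle⟩ := RFIFAux.exists_alphaMax h1 h2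
  set ext : C(RFIFAux.K D, ℝ) → (ℝ × ℝ → ℝ) :=
    fun gh p => if h : p ∈ RFIFAux.K D then gh ⟨p, h⟩ else 0 with hext
  have hextval : ∀ gh q (hq : q ∈ RFIFAux.K D), ext gh q = gh ⟨q, hq⟩ :=
    fun gh q hq => dif_pos hq
  have hextr : ∀ gh : C(RFIFAux.K D, ℝ), (RFIFAux.K D).restrict (ext gh) = gh :=
    fun gh => funext fun q => dif_pos q.2
  have hextc : ∀ gh : C(RFIFAux.K D, ℝ), ContinuousOn (ext gh) (RFIFAux.K D) := fun gh =>
    continuousOn_iff_continuous_restrict.mpr (by rw [show (RFIFAux.K D).domRestrict (ext gh) = gh from hextr gh]; exact gh.continuous)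
  set Φ : C(RFIFAux.K D, ℝ) → C(RFIFAux.K D, ℝ) := fun gh =>
    ⟨(RFIFAux.K D).restrict (RFIFAux.T0 D (ext gh)),
      continuousOn_iff_continuous_restrict.mp (RFIFAux.T0_cont h1 h2 hm (hextc gh))⟩
    with hΦ
  have hcontr : ∀ gh hh, dist (Φ gh) (Φ hh) ≤ α * dist gh hh := by
    intro gh hh
    rw [ContinuousMap.dist_le (mul_nonneg hα0 dist_nonneg)]
    intro q
    have hd : ∀ q' ∈ RFIFAux.K D, |ext gh q' - ext hh q'| ≤ dist gh hh := by
      intro q' hq'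
      rw [hextval gh q' hq', hextval hh q' hq', ← Real.dist_eq]
      exact ContinuousMap.dist_apply_le_dist _
    have hb := RFIFAux.T0_bound h1 h2 hd hαle dist_nonneg (↑q) q.2
    rw [Real.dist_eq]
    exact hb
  have hlip : LipschitzWith ⟨α, hα0⟩ Φ :=
    LipschitzWith.of_dist_le_mul (by intro gh hh; exact hcontr gh hh)
  have hcw : ContractingWith ⟨α, hα0⟩ Φ := ⟨by exact_mod_cast hα1, hlip⟩
  set fhat := ContractingWith.fixedPoint Φ hcw with hfhat
  have hfixpt : Φ fhat = fhat := hcw.fixedPoint_isFixedPt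
  set f : ℝ × ℝ → ℝ := ext fhat with hfdef
  have hfK : ∀ p ∈ RFIFAux.K D, RFIFAux.T0 D f p = f p := by
    intro p hp
    have h0 := congrFun (congrArg DFunLike.coe hfixpt) ⟨p, hp⟩
    calc RFIFAux.T0 D f p = fhat ⟨p, hp⟩ := h0
      _ = f p := (hextval fhat p hp).symm
  refine ⟨f, ⟨hextc fhat, RFIFAux.grid_values h1 h2 hm hfK, ?_⟩, ?_⟩
  · -- self-referential equation
    intro i j hi1 hiN hj1 hjM p hp
    have hub : Set.BijOn (D.u i) (D.Ii' i) (D.Ii i) := (h1.hu i hi1 hiN).2.1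
    have hvb : Set.BijOn (D.v j) (D.Jj' j) (D.Jj j) := (h1.hv j hj1 hjM).2.1
    have hmem : (D.u i p.1, D.v j p.2) ∈ D.Dij i j :=
      ⟨hub.mapsTo hp.1, hvb.mapsTo hp.2⟩
    have hK' : (D.u i p.1, D.v j p.2) ∈ RFIFAux.K D :=
      RFIFAux.Dij_subset_K h1 hi1 hiN hj1 hjM hmem
    have hT := hfK _ hK'
    rw [RFIFAux.Tval h1 hm f hi1 hiN hj1 hjM hmem.1 hmem.2] at hT
    rw [Axis.uinv_u hax hi1 hiN hp.1, Axis.uinv_u hay hj1 hjM hp.2] at hT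
    exact hT.symm
  · -- uniqueness
    intro g hg
    set gh : C(RFIFAux.K D, ℝ) :=
      ⟨(RFIFAux.K D).restrict g, continuousOn_iff_continuous_restrict.mp hg.1⟩ with hgh
    have hextg : ∀ q ∈ RFIFAux.K D, ext gh q = g q := by
      intro q hq
      rw [hextval gh q hq]
      rfl
    have hTg : ∀ p ∈ RFIFAux.K D, RFIFAux.T0 D g p = g p := by
      rintro ⟨x, y⟩ hp
      obtain ⟨hi1, hiN, hxi⟩ := Axis.ix_spec hax (x := x) hp.1
      obtain ⟨hj1, hjM, hyj⟩ := Axis.ix_spec hay (x := y) hp.2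
      have hiN' : (RFIFAux.AX D).ix x ≤ D.N := hiN
      have hjM' : (RFIFAux.AY D).ix y ≤ D.M := hjM
      rw [RFIFAux.Tval h1 hm g hi1 hiN' hj1 hjM' hxi hyj]
      have hpd : (((RFIFAux.AX D).uinv ((RFIFAux.AX D).ix x) x,
          (RFIFAux.AY D).uinv ((RFIFAux.AY D).ix y) y) : ℝ × ℝ) ∈
          D.Dij' ((RFIFAux.AX D).ix x) ((RFIFAux.AY D).ix y) :=
        ⟨Axis.uinv_mapsTo hax hi1 hiN hxi, Axis.uinv_mapsTo hay hj1 hjM hyj⟩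
      have hself := hg.2.2 _ _ hi1 hiN' hj1 hjM' _ hpd
      have e1 : D.u ((RFIFAux.AX D).ix x) ((RFIFAux.AX D).uinv ((RFIFAux.AX D).ix x) x) = x :=
        Axis.u_uinv hax hi1 hiN hxi
      have e2 : D.v ((RFIFAux.AY D).ix y) ((RFIFAux.AY D).uinv ((RFIFAux.AY D).ix y) y) = y :=
        Axis.u_uinv hay hj1 hjM hyj
      rw [e1, e2] at hself
      exact hself.symm
    have hfixg : Φ gh = gh := by
      ext q
      calc Φ gh q = RFIFAux.T0 D (ext gh) ↑q := rfl
        _ = RFIFAux.T0 D g ↑q := RFIFAux.T0_congr h1 hextg ↑q q.2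
        _ = g ↑q := hTg ↑q q.2
        _ = gh q := rfl
    have heq : gh = fhat := hcw.fixedPoint_unique hfixg
    intro p hp
    calc g p = gh ⟨p, hp⟩ := rfl
      _ = fhat ⟨p, hp⟩ := by rw [heq]
      _ = f p := (hextval fhat p hp).symm
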